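/- Fix Δ > 0. Among all functions of the form α(t) = c₀ cos t + c₁ sin t + c₂ cos(nt) + c₃ sin(nt) with n ∈ ℕ, n ≥ 2, satisfying the constraint ∫₀^{2π} (α'² − α²) dt = 2πΔ², the minimal value of ∫₀^{2π} (α + α'')² dt is 6πΔ², attained exactly when n = 2 and c₂² + c₃² = (2/3)Δ². -/

import Mathlib

open Real intervalIntegral

lemma alg (m A B C D s1 c1 sn cn : ℝ) (hm0 : m ≠ 0) (hp : m+1 ≠ 0) (hq : m-1 ≠ 0)
    (p1 : s1^2+c1^2=1) (p2 : sn^2+cn^2=1) :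
    (A*c1+B*s1+C*cn+D*sn)^2 =
      (A^2+B^2+C^2+D^2)/2*1 + (A^2-B^2)/2*(c1*c1 + s1*(-s1))
      + (C^2-D^2)/(2*m)*(m*cn*cn + sn*(-(m*sn)))
      + A*B*(c1*s1 + s1*c1)
      + C*D/m*((m*cn)*sn + sn*(m*cn))
      + (A*C-B*D)/(m+1)*((m*cn)*c1 + sn*(-s1) + ((-(m*sn))*s1 + cn*c1))
      + (A*C+B*D)/(m-1)*((m*cn)*c1 + sn*(-s1) - ((-(m*sn))*s1 + cn*c1))
      - (A*D+B*C)/(m+1)*((-(m*sn))*c1 + cn*(-s1) - ((m*cn)*s1 + sn*c1))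
      + (B*C-A*D)/(m-1)*((-(m*sn))*c1 + cn*(-s1) + ((m*cn)*s1 + sn*c1)) := by
  field_simp
  linear_combination (m^2 - 1) * ((A^2+B^2)*p1 + (C^2+D^2)*p2)

lemma master (n : ℕ) (hn : 2 ≤ n) (A B C D : ℝ) :
    ∫ t in (0:ℝ)..(2*π), (A * cos t + B * sin t + C * cos (n*t) + D * sin (n*t))^2
      = π * (A^2 + B^2 + C^2 + D^2) := by
  set m : ℝ := (n : ℝ) with hmdef
  have hm : 2 ≤ m := by rw [hmdef]; exact_mod_cast hn
  have hm0 : m ≠ 0 := by nlinarith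
  have hmp : m + 1 ≠ 0 := by nlinarith
  have hmm : m - 1 ≠ 0 := by nlinarith
  set F : ℝ → ℝ := fun t =>
      (A^2+B^2+C^2+D^2)/2 * t
    + (A^2-B^2)/2 * (sin t * cos t)
    + (C^2-D^2)/(2*m) * (sin (m*t) * cos (m*t))
    + A*B * (sin t * sin t)
    + C*D/m * (sin (m*t) * sin (m*t))
    + (A*C-B*D)/(m+1) * (sin (m*t)*cos t + cos (m*t)*sin t)
    + (A*C+B*D)/(m-1) * (sin (m*t)*cos t - cos (m*t)*sin t)
    - (A*D+B*C)/(m+1) * (cos (m*t)*cos t - sin (m*t)*sin t)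
    + (B*C-A*D)/(m-1) * (cos (m*t)*cos t + sin (m*t)*sin t) with hF
  have hder : ∀ t ∈ Set.uIcc (0:ℝ) (2*π), HasDerivAt F
      ((A * cos t + B * sin t + C * cos (m*t) + D * sin (m*t))^2) t := by
    intro t _
    have hs : HasDerivAt Real.sin (cos t) t := Real.hasDerivAt_sin t
    have hc : HasDerivAt Real.cos (-sin t) t := Real.hasDerivAt_cos t
    have hsm : HasDerivAt (fun t => Real.sin (m*t)) (m * cos (m*t)) t := by
      simpa [Function.comp_def, mul_comm (cos (m*t)) m] using (Real.hasDerivAt_sin (m*t)).comp t ((hasDerivAt_id t).const_mul m)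
    have hcm : HasDerivAt (fun t => Real.cos (m*t)) (-(m * sin (m*t))) t := by
      simpa [Function.comp_def, mul_comm (sin (m*t)) m] using (Real.hasDerivAt_cos (m*t)).comp t ((hasDerivAt_id t).const_mul m)
    have H := (((((((((hasDerivAt_id t).const_mul ((A^2+B^2+C^2+D^2)/2)).add
      ((hs.mul hc).const_mul ((A^2-B^2)/2))).add
      ((hsm.mul hcm).const_mul ((C^2-D^2)/(2*m)))).add
      ((hs.mul hs).const_mul (A*B))).add
      ((hsm.mul hsm).const_mul (C*D/m))).add
      (((hsm.mul hc).add (hcm.mul hs)).const_mul ((A*C-B*D)/(m+1)))).add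
      (((hsm.mul hc).sub (hcm.mul hs)).const_mul ((A*C+B*D)/(m-1)))).sub
      (((hcm.mul hc).sub (hsm.mul hs)).const_mul ((A*D+B*C)/(m+1)))).add
      (((hcm.mul hc).add (hsm.mul hs)).const_mul ((B*C-A*D)/(m-1)))
    refine H.congr_deriv ?_
    have p1 : sin t ^ 2 + cos t ^ 2 = 1 := sin_sq_add_cos_sq t
    have p2 : sin (m*t) ^ 2 + cos (m*t) ^ 2 = 1 := sin_sq_add_cos_sq (m*t)
    linear_combination (-1:ℝ) * alg m A B C D (sin t) (cos t) (sin (m*t)) (cos (m*t)) hm0 hmp hmm p1 p2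
  have hint : IntervalIntegrable
      (fun t => (A * cos t + B * sin t + C * cos (m*t) + D * sin (m*t))^2)
      MeasureTheory.volume 0 (2*π) := by
    apply Continuous.intervalIntegrable; fun_prop
  have := intervalIntegral.integral_eq_sub_of_hasDerivAt hder hint
  rw [this]
  have e1 : sin (m * (2*π)) = 0 := by
    have : m * (2*π) = 0 + (n:ℝ) * (2*π) := by rw [hmdef]; ring
    rw [this, Real.sin_add_nat_mul_two_pi, Real.sin_zero]
  have e2 : cos (m * (2*π)) = 1 := by
    have : m * (2*π) = 0 + (n:ℝ) * (2*π) := by rw [hmdef]; ring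
    rw [this, Real.cos_add_nat_mul_two_pi, Real.cos_zero]
  simp only [hF, mul_zero, Real.sin_two_pi, Real.cos_two_pi, e1, e2, Real.sin_zero, Real.cos_zero]
  ring

theorem stmt_2 (Δ : ℝ) (hΔ : 0 < Δ) (n : ℕ) (hn : 2 ≤ n) (c₀ c₁ c₂ c₃ : ℝ)
    (α : ℝ → ℝ)
    (hα : ∀ t, α t = c₀ * Real.cos t + c₁ * Real.sin t
      + c₂ * Real.cos (n * t) + c₃ * Real.sin (n * t))
    (hcon : ∫ t in (0:ℝ)..(2 * Real.pi), ((deriv α t) ^ 2 - (α t) ^ 2)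
      = 2 * Real.pi * Δ ^ 2) :
    6 * Real.pi * Δ ^ 2 ≤ ∫ t in (0:ℝ)..(2 * Real.pi), (α t + deriv (deriv α) t) ^ 2
    ∧ ((∫ t in (0:ℝ)..(2 * Real.pi), (α t + deriv (deriv α) t) ^ 2
          = 6 * Real.pi * Δ ^ 2)
        ↔ (n = 2 ∧ c₂ ^ 2 + c₃ ^ 2 = (2 / 3) * Δ ^ 2)) := by
  have hfe : α = fun t => c₀ * Real.cos t + c₁ * Real.sin t
      + c₂ * Real.cos (n * t) + c₃ * Real.sin (n * t) := funext hα
  subst hfe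
  have hm2 : (2:ℝ) ≤ (n:ℝ) := by exact_mod_cast hn
  have hsm : ∀ t : ℝ, HasDerivAt (fun t => Real.sin ((n:ℝ)*t)) ((n:ℝ) * cos ((n:ℝ)*t)) t := by
    intro t
    simpa [Function.comp_def, mul_comm (cos ((n:ℝ)*t)) (n:ℝ)] using
      (Real.hasDerivAt_sin ((n:ℝ)*t)).comp t ((hasDerivAt_id t).const_mul (n:ℝ))
  have hcm : ∀ t : ℝ, HasDerivAt (fun t => Real.cos ((n:ℝ)*t)) (-((n:ℝ) * sin ((n:ℝ)*t))) t := by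
    intro t
    simpa [Function.comp_def, mul_comm (sin ((n:ℝ)*t)) (n:ℝ)] using
      (Real.hasDerivAt_cos ((n:ℝ)*t)).comp t ((hasDerivAt_id t).const_mul (n:ℝ))
  have hd1 : deriv (fun t => c₀ * Real.cos t + c₁ * Real.sin t
      + c₂ * Real.cos ((n:ℝ) * t) + c₃ * Real.sin ((n:ℝ) * t))
      = fun t => c₁ * cos t + (-c₀) * sin t + (c₃*(n:ℝ)) * cos ((n:ℝ)*t)
        + (-(c₂*(n:ℝ))) * sin ((n:ℝ)*t) := by
    funext t
    have H := ((((Real.hasDerivAt_cos t).const_mul c₀).add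
      ((Real.hasDerivAt_sin t).const_mul c₁)).add ((hcm t).const_mul c₂)).add
      ((hsm t).const_mul c₃)
    refine H.deriv.trans ?_; ring
  have hd2 : deriv (fun t => c₁ * cos t + (-c₀) * sin t + (c₃*(n:ℝ)) * cos ((n:ℝ)*t)
        + (-(c₂*(n:ℝ))) * sin ((n:ℝ)*t))
      = fun t => (-c₀) * cos t + (-c₁) * sin t + (-(c₂*(n:ℝ)^2)) * cos ((n:ℝ)*t)
        + (-(c₃*(n:ℝ)^2)) * sin ((n:ℝ)*t) := by
    funext t
    have H := ((((Real.hasDerivAt_cos t).const_mul c₁).add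
      ((Real.hasDerivAt_sin t).const_mul (-c₀))).add ((hcm t).const_mul (c₃*(n:ℝ)))).add
      ((hsm t).const_mul (-(c₂*(n:ℝ))))
    refine H.deriv.trans ?_; ring
  simp only [hd1] at hcon
  simp only [hd1, hd2]
  -- evaluate the constraint integral
  have hi1 : IntervalIntegrable (fun t => (c₁ * cos t + (-c₀) * sin t + (c₃*(n:ℝ)) * cos ((n:ℝ)*t)
        + (-(c₂*(n:ℝ))) * sin ((n:ℝ)*t))^2) MeasureTheory.volume 0 (2*π) := by
    apply Continuous.intervalIntegrable; fun_prop
  have hi2 : IntervalIntegrable (fun t => (c₀ * Real.cos t + c₁ * Real.sin t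
      + c₂ * Real.cos ((n:ℝ) * t) + c₃ * Real.sin ((n:ℝ) * t))^2) MeasureTheory.volume 0 (2*π) := by
    apply Continuous.intervalIntegrable; fun_prop
  rw [intervalIntegral.integral_sub hi1 hi2] at hcon
  have e1 : (∫ t in (0:ℝ)..(2*π), (c₁ * cos t + (-c₀) * sin t + (c₃*(n:ℝ)) * cos ((n:ℝ)*t)
        + (-(c₂*(n:ℝ))) * sin ((n:ℝ)*t))^2) = π * (c₁^2 + (-c₀)^2 + (c₃*(n:ℝ))^2 + (-(c₂*(n:ℝ)))^2) :=
    master n hn c₁ (-c₀) (c₃*(n:ℝ)) (-(c₂*(n:ℝ)))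
  have e2 : (∫ t in (0:ℝ)..(2*π), (c₀ * Real.cos t + c₁ * Real.sin t
      + c₂ * Real.cos ((n:ℝ) * t) + c₃ * Real.sin ((n:ℝ) * t))^2) = π * (c₀^2 + c₁^2 + c₂^2 + c₃^2) :=
    master n hn c₀ c₁ c₂ c₃
  rw [e1, e2] at hcon
  -- evaluate the target integral
  have hshape : Set.EqOn
      (fun t => ((c₀ * Real.cos t + c₁ * Real.sin t + c₂ * Real.cos ((n:ℝ) * t) + c₃ * Real.sin ((n:ℝ) * t))
        + ((-c₀) * cos t + (-c₁) * sin t + (-(c₂*(n:ℝ)^2)) * cos ((n:ℝ)*t) + (-(c₃*(n:ℝ)^2)) * sin ((n:ℝ)*t)))^2)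
      (fun t => ((0:ℝ) * cos t + (0:ℝ) * sin t + (c₂*(1-(n:ℝ)^2)) * cos ((n:ℝ)*t)
        + (c₃*(1-(n:ℝ)^2)) * sin ((n:ℝ)*t))^2)
      (Set.uIcc 0 (2*π)) := fun t _ => by ring
  have e3 : (∫ t in (0:ℝ)..(2*π), ((c₀ * Real.cos t + c₁ * Real.sin t + c₂ * Real.cos ((n:ℝ) * t) + c₃ * Real.sin ((n:ℝ) * t))
        + ((-c₀) * cos t + (-c₁) * sin t + (-(c₂*(n:ℝ)^2)) * cos ((n:ℝ)*t) + (-(c₃*(n:ℝ)^2)) * sin ((n:ℝ)*t)))^2)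
      = π * ((0:ℝ)^2 + (0:ℝ)^2 + (c₂*(1-(n:ℝ)^2))^2 + (c₃*(1-(n:ℝ)^2))^2) := by
    rw [intervalIntegral.integral_congr hshape]
    exact master n hn 0 0 (c₂*(1-(n:ℝ)^2)) (c₃*(1-(n:ℝ)^2))
  rw [e3]
  -- now pure algebra
  have hπ : 0 < π := Real.pi_pos
  have hΔ2 : 0 < Δ^2 := pow_pos hΔ 2
  have key : ((n:ℝ)^2 - 1) * (c₂^2 + c₃^2) = 2 * Δ^2 := by
    nlinarith [hcon, hπ]
  have hval : π * ((0:ℝ)^2 + (0:ℝ)^2 + (c₂*(1-(n:ℝ)^2))^2 + (c₃*(1-(n:ℝ)^2))^2)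
      = π * (((n:ℝ)^2 - 1) * (2 * Δ^2)) := by
    linear_combination π * ((n:ℝ)^2 - 1) * key
  rw [hval]
  clear hcon hval e1 e2 e3 hshape hi1 hi2 hd1 hd2 hsm hcm hα
  constructor
  · have h4 : (4:ℝ) ≤ (n:ℝ)^2 := by nlinarith
    nlinarith [mul_pos hπ hΔ2, h4]
  constructor
  · intro hV
    have hn2 : (n:ℝ) = 2 := by
      by_contra hne
      have h3 : 3 ≤ n := by
        rcases Nat.lt_or_ge n 3 with h | h
        · exfalso; apply hne
          have : n = 2 := le_antisymm (Nat.lt_succ_iff.mp h) hn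
          rw [this]; norm_num
        · exact h
      have h3' : (3:ℝ) ≤ (n:ℝ) := by exact_mod_cast h3
      have h9 : (9:ℝ) ≤ (n:ℝ)^2 := by nlinarith
      nlinarith [mul_pos hπ hΔ2, h9, hV]
    have hnn : n = 2 := by exact_mod_cast hn2
    refine ⟨hnn, ?_⟩
    rw [hn2] at key
    linarith
  · rintro ⟨hnn, hc⟩
    subst hnn
    push_cast at key ⊢
    ring
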